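/- arXiv:2001.08959 — 7 statements merged into one kernel-verified Lean document; each statement's English description precedes it below -/
import Mathlib

section
/- For every pair of complex numbers x, y with |x| = 1 and |y| = 1, the N×N complex matrix L(x,y) whose (k,k)-entry is D_k(x,y) and whose (k,m)-entry for m ≠ k is −θ_{k,m} A_{k,m}(x,y) is non-singular, i.e. det L(x,y) ≠ 0. -/
/-- For `|x| = |y| = 1`, the `N×N` matrix `L(x,y)` with diagonal entries
`D_k(x,y)` and off-diagonal entries `−θ_{k,m} A_{k,m}(x,y)` (indices `k,m ∈ {1,…,N}`)
is non-singular: `det L(x,y) ≠ 0`. -/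
theorem stmt_1 (N : ℕ) (hN : 1 ≤ N)
    (θ : ℕ → ℕ → ℝ)
    (hθnn : ∀ k ∈ Finset.Icc 1 N, ∀ m ∈ Finset.range (N + 1), m ≠ k → 0 ≤ θ k m)
    (hθ0 : ∀ k ∈ Finset.Icc 1 N, 0 < θ k 0)
    (θdot : ℕ → ℝ)
    (hθdot : ∀ k, θdot k = ∑ m ∈ (Finset.range (N + 1)).erase k, θ k m)
    (q : ℕ → ℕ × ℕ → ℝ)
    (hqsum : ∀ k, Summable (q k))
    (hqnn : ∀ k p, 0 ≤ q k p)
    (D : ℕ → ℂ → ℂ → ℂ)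
    (hD : ∀ k x y, D k x y =
      (∑' p : ℕ × ℕ, if p ≠ (0, 0) then (q k p : ℂ) * (1 - x ^ p.1 * y ^ p.2) else 0)
        + (θdot k : ℂ))
    (a : ℕ → ℕ → ℕ × ℕ → ℝ)
    (hann : ∀ k m p, 0 ≤ a k m p)
    (hasum : ∀ k m, (∑' p : ℕ × ℕ, a k m p) = 1)
    (A : ℕ → ℕ → ℂ → ℂ → ℂ)
    (hA : ∀ k m x y, A k m x y = ∑' p : ℕ × ℕ, (a k m p : ℂ) * x ^ p.1 * y ^ p.2)
    (x y : ℂ) (hx : ‖x‖ = 1) (hy : ‖y‖ = 1) :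
    Matrix.det (Matrix.of fun i j : Fin N =>
      if i = j then D (i.1 + 1) x y
      else -((θ (i.1 + 1) (j.1 + 1) : ℂ) * A (i.1 + 1) (j.1 + 1) x y)) ≠ 0 := by
  intro hdet
  obtain ⟨v, hv0, hv⟩ := (Matrix.exists_mulVec_eq_zero_iff).mpr hdet
  obtain ⟨i, -, hmax⟩ := Finset.exists_max_image Finset.univ (fun j => ‖v j‖)
    ⟨⟨0, hN⟩, Finset.mem_univ _⟩
  have hxy : ∀ p : ℕ × ℕ, ‖x ^ p.1 * y ^ p.2‖ = 1 := by
    intro p; simp [map_mul, map_pow, hx, hy]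
  have hvi : 0 < ‖v i‖ := by
    obtain ⟨j, hj⟩ := Function.ne_iff.mp hv0
    exact lt_of_lt_of_le (by simpa using hj) (hmax j (Finset.mem_univ j))
  set k := i.1 + 1 with hk
  have hkI : k ∈ Finset.Icc 1 N := by
    simp only [Finset.mem_Icc]; omega
  -- |A k m x y| ≤ 1
  have hAle : ∀ m, ‖A k m x y‖ ≤ 1 := by
    intro m
    have h1 := hasum k m
    have hsa : Summable (a k m) := by
      by_contra h
      rw [tsum_eq_zero_of_not_summable h] at h1
      norm_num at h1
    have hnorm : ∀ p : ℕ × ℕ, ‖(a k m p : ℂ) * x ^ p.1 * y ^ p.2‖ = a k m p := by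
      intro p
      rw [norm_mul, norm_mul, Complex.norm_real, Real.norm_eq_abs,
        abs_of_nonneg (hann k m p), norm_pow, norm_pow, hx, hy]
      simp
    have hfun : (fun p : ℕ × ℕ => ‖(a k m p : ℂ) * x ^ p.1 * y ^ p.2‖) = a k m :=
      funext hnorm
    rw [hA]
    calc ‖∑' p : ℕ × ℕ, (a k m p : ℂ) * x ^ p.1 * y ^ p.2‖
        ≤ ∑' p : ℕ × ℕ, ‖(a k m p : ℂ) * x ^ p.1 * y ^ p.2‖ :=
          norm_tsum_le_tsum_norm (by rw [hfun]; exact hsa)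
      _ = ∑' p : ℕ × ℕ, a k m p := by rw [hfun]
      _ = 1 := h1
  -- Re D ≥ θdot
  have hsumm : Summable (fun p : ℕ × ℕ =>
      if p ≠ (0, 0) then (q k p : ℂ) * (1 - x ^ p.1 * y ^ p.2) else 0) := by
    apply Summable.of_norm_bounded ((hqsum k).mul_left 2)
    intro p
    rcases eq_or_ne p (0, 0) with hp | hp
    · simp only [hp, ne_eq, not_true_eq_false, if_false, norm_zero]
      linarith [hqnn k (0, 0)]
    · rw [if_pos hp, norm_mul, Complex.norm_real, Real.norm_eq_abs,
        abs_of_nonneg (hqnn k p)]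
      have h2 : ‖1 - x ^ p.1 * y ^ p.2‖ ≤ 2 := by
        calc ‖1 - x ^ p.1 * y ^ p.2‖ ≤ ‖(1 : ℂ)‖ + ‖x ^ p.1 * y ^ p.2‖ := norm_sub_le _ _
          _ = 2 := by
            rw [hxy p, norm_one]; norm_num
      nlinarith [hqnn k p]
  have hReD : θdot k ≤ (D k x y).re := by
    rw [hD]
    simp only [Complex.add_re, Complex.ofReal_re]
    have h0 : 0 ≤ (∑' p : ℕ × ℕ,
        if p ≠ (0, 0) then (q k p : ℂ) * (1 - x ^ p.1 * y ^ p.2) else 0).re := by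
      rw [Complex.re_tsum hsumm]
      apply tsum_nonneg
      intro p
      rcases eq_or_ne p (0, 0) with hp | hp
      · simp [hp]
      · rw [if_pos hp, Complex.re_ofReal_mul, Complex.sub_re, Complex.one_re]
        have h1 : (x ^ p.1 * y ^ p.2).re ≤ 1 := by
          calc (x ^ p.1 * y ^ p.2).re ≤ ‖x ^ p.1 * y ^ p.2‖ :=
                Complex.re_le_norm _
            _ = 1 := hxy p
        have := hqnn k p
        nlinarith
    linarith
  -- row equation
  have hrow := congrFun hv i
  simp only [Matrix.mulVec, dotProduct, Matrix.of_apply, Pi.zero_apply] at hrow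
  rw [← Finset.add_sum_erase _ _ (Finset.mem_univ i), if_pos rfl] at hrow
  have h3 : ∑ j ∈ Finset.univ.erase i,
      (if i = j then D (i.1 + 1) x y
        else -((θ (i.1 + 1) (j.1 + 1) : ℂ) * A (i.1 + 1) (j.1 + 1) x y)) * v j
      = -∑ j ∈ Finset.univ.erase i,
          (θ k (j.1 + 1) : ℂ) * A k (j.1 + 1) x y * v j := by
    rw [← Finset.sum_neg_distrib]
    refine Finset.sum_congr rfl fun j hj => ?_
    rw [if_neg (fun h => (Finset.mem_erase.mp hj).1 h.symm)]
    ring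
  rw [h3] at hrow
  have heq : D k x y * v i
      = ∑ j ∈ Finset.univ.erase i, (θ k (j.1 + 1) : ℂ) * A k (j.1 + 1) x y * v j := by
    linear_combination hrow
  set S : ℝ := ∑ j ∈ Finset.univ.erase i, θ k (j.1 + 1) with hS
  have habs : ‖D k x y‖ * ‖v i‖ ≤ S * ‖v i‖ := by
    rw [← norm_mul, heq, hS, Finset.sum_mul]
    calc ‖∑ j ∈ Finset.univ.erase i,
          (θ k (j.1 + 1) : ℂ) * A k (j.1 + 1) x y * v j‖
        ≤ ∑ j ∈ Finset.univ.erase i,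
            ‖(θ k (j.1 + 1) : ℂ) * A k (j.1 + 1) x y * v j‖ :=
          norm_sum_le _ _
      _ ≤ ∑ j ∈ Finset.univ.erase i, θ k (j.1 + 1) * ‖v i‖ := by
          refine Finset.sum_le_sum fun j hj => ?_
          have hji : j ≠ i := (Finset.mem_erase.mp hj).1
          have hθj : 0 ≤ θ k (j.1 + 1) := by
            refine hθnn k hkI (j.1 + 1) (by simp only [Finset.mem_range]; omega) ?_
            intro h
            exact hji (Fin.ext (by omega))
          rw [norm_mul, norm_mul, Complex.norm_real, Real.norm_eq_abs, abs_of_nonneg hθj]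
          have hA1 := hAle (j.1 + 1)
          have hvj := hmax j (Finset.mem_univ j)
          have h1 := norm_nonneg (v j)
          calc θ k (j.1 + 1) * ‖A k (j.1 + 1) x y‖ * ‖v j‖
              ≤ θ k (j.1 + 1) * (1 * ‖v i‖) := by
                rw [mul_assoc]
                exact mul_le_mul_of_nonneg_left
                  (mul_le_mul hA1 hvj h1 zero_le_one) hθj
            _ = θ k (j.1 + 1) * ‖v i‖ := by ring
  -- S < θdot k
  have h0mem : (0 : ℕ) ∈ (Finset.range (N + 1)).erase k := by
    simp only [Finset.mem_erase, Finset.mem_range]; omega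
  have hsplit : θdot k = θ k 0 + ∑ m ∈ ((Finset.range (N + 1)).erase k).erase 0, θ k m := by
    rw [hθdot, ← Finset.add_sum_erase _ _ h0mem]
  have himg : ((Finset.range (N + 1)).erase k).erase 0
      = Finset.image (fun j : Fin N => j.1 + 1) (Finset.univ.erase i) := by
    ext m
    simp only [Finset.mem_erase, Finset.mem_range, Finset.mem_image, Finset.mem_univ,
      true_and, and_true]
    constructor
    · rintro ⟨hm0, hmk, hmN⟩
      refine ⟨⟨m - 1, by omega⟩, ?_, ?_⟩
      · intro hji
        apply hmk
        have h5 : m - 1 = (i : ℕ) := by simpa using congrArg Fin.val hji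
        omega
      · show m - 1 + 1 = m
        omega
    · rintro ⟨j, hj, rfl⟩
      refine ⟨by omega, ?_, by omega⟩
      intro hjk
      exact hj (Fin.ext (by omega))
  have hSeq : ∑ m ∈ ((Finset.range (N + 1)).erase k).erase 0, θ k m = S := by
    rw [himg, Finset.sum_image]
    intro p _ r _ h
    exact Fin.ext (by simp only at h; omega)
  have hθ0k := hθ0 k hkI
  have hSlt : S < θdot k := by rw [hsplit, hSeq]; linarith
  have hDge : θdot k ≤ ‖D k x y‖ := le_trans hReD (Complex.re_le_norm _)
  have h6 : θdot k * ‖v i‖ ≤ ‖D k x y‖ * ‖v i‖ :=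
    mul_le_mul_of_nonneg_right hDge hvi.le
  have h7 : S * ‖v i‖ < θdot k * ‖v i‖ :=
    mul_lt_mul_of_pos_right hSlt hvi
  linarith
end

section
/- For every complex x with |x| ≤ 1 and every complex y with |y| = 1, one has |g(x,y)| < |f(x,y)|. -/
/-- with `f(x,y) = y·[θ + Σ_{i≥1} q_{i,0}(1 − x^i) + S]` and
`g(x,y) = Σ_{i,j≥1} q_{i,j} x^i y^j + Σ_{j≥1} q_{0,j} y^j + Σ_{i≥0} q̃_i x^i`,
where `S = Σ_{i,j≥1} q_{i,j} + Σ_{j≥1} q_{0,j} + Σ_{i≥0} q̃_i`, for every `|x| ≤ 1`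
and `|y| = 1` one has `|g(x,y)| < |f(x,y)|`.
(Here `q (i,j)` encodes `q_{i+1,j+1}`, `q0 j` encodes `q_{0,j+1}`, `qr i` encodes
`q_{i+1,0}`, and `qt i` encodes `q̃_i`.) -/
theorem stmt_4 (θ : ℝ) (hθ : 0 < θ)
    (q : ℕ × ℕ → ℝ) (q0 qr qt : ℕ → ℝ)
    (hq : Summable q) (hq0 : Summable q0) (hqr : Summable qr) (hqt : Summable qt)
    (hqnn : ∀ p, 0 ≤ q p) (hq0nn : ∀ j, 0 ≤ q0 j)
    (hqrnn : ∀ i, 0 ≤ qr i) (hqtnn : ∀ i, 0 ≤ qt i)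
    (S : ℝ) (hS : S = (∑' p : ℕ × ℕ, q p) + (∑' j : ℕ, q0 j) + ∑' i : ℕ, qt i)
    (f g : ℂ → ℂ → ℂ)
    (hf : ∀ x y, f x y
      = y * ((θ : ℂ) + (∑' i : ℕ, (qr i : ℂ) * (1 - x ^ (i + 1))) + (S : ℂ)))
    (hg : ∀ x y, g x y
      = (∑' p : ℕ × ℕ, (q p : ℂ) * x ^ (p.1 + 1) * y ^ (p.2 + 1))
        + (∑' j : ℕ, (q0 j : ℂ) * y ^ (j + 1)) + ∑' i : ℕ, (qt i : ℂ) * x ^ i)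
    (x y : ℂ) (hx : ‖x‖ ≤ 1) (hy : ‖y‖ = 1) :
    ‖g x y‖ < ‖f x y‖ := by
  have hx' : ‖x‖ ≤ 1 := hx
  have hy' : ‖y‖ = 1 := hy
  have hxp : ∀ n : ℕ, ‖x ^ n‖ ≤ 1 := fun n => by
    rw [norm_pow]; exact pow_le_one₀ (norm_nonneg x) hx'
  have hyp : ∀ n : ℕ, ‖y ^ n‖ ≤ 1 := fun n => by
    rw [norm_pow, hy', one_pow]
  -- bounds on norms of the three summands of g
  have hb1 : ∀ p : ℕ × ℕ, ‖(q p : ℂ) * x ^ (p.1 + 1) * y ^ (p.2 + 1)‖ ≤ q p := by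
    intro p
    rw [norm_mul, norm_mul, Complex.norm_real, Real.norm_of_nonneg (hqnn p)]
    calc q p * ‖x ^ (p.1 + 1)‖ * ‖y ^ (p.2 + 1)‖
        ≤ q p * ‖x ^ (p.1 + 1)‖ * 1 :=
          mul_le_mul_of_nonneg_left (hyp _) (mul_nonneg (hqnn p) (norm_nonneg _))
      _ = q p * ‖x ^ (p.1 + 1)‖ := mul_one _
      _ ≤ q p * 1 := mul_le_mul_of_nonneg_left (hxp _) (hqnn p)
      _ = q p := mul_one _
  have hb2 : ∀ j : ℕ, ‖(q0 j : ℂ) * y ^ (j + 1)‖ ≤ q0 j := by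
    intro j
    rw [norm_mul, Complex.norm_real, Real.norm_of_nonneg (hq0nn j)]
    calc q0 j * ‖y ^ (j + 1)‖ ≤ q0 j * 1 := mul_le_mul_of_nonneg_left (hyp _) (hq0nn j)
      _ = q0 j := mul_one _
  have hb3 : ∀ i : ℕ, ‖(qt i : ℂ) * x ^ i‖ ≤ qt i := by
    intro i
    rw [norm_mul, Complex.norm_real, Real.norm_of_nonneg (hqtnn i)]
    calc qt i * ‖x ^ i‖ ≤ qt i * 1 := mul_le_mul_of_nonneg_left (hxp _) (hqtnn i)
      _ = qt i := mul_one _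
  have hs1 : Summable (fun p : ℕ × ℕ => (q p : ℂ) * x ^ (p.1 + 1) * y ^ (p.2 + 1)) :=
    Summable.of_norm (hq.of_nonneg_of_le (fun _ => norm_nonneg _) hb1)
  have hs2 : Summable (fun j : ℕ => (q0 j : ℂ) * y ^ (j + 1)) :=
    Summable.of_norm (hq0.of_nonneg_of_le (fun _ => norm_nonneg _) hb2)
  have hs3 : Summable (fun i : ℕ => (qt i : ℂ) * x ^ i) :=
    Summable.of_norm (hqt.of_nonneg_of_le (fun _ => norm_nonneg _) hb3)
  -- bound |g| ≤ S
  have hgle : ‖g x y‖ ≤ S := by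
    rw [hg, hS]
    calc ‖(∑' p : ℕ × ℕ, (q p : ℂ) * x ^ (p.1 + 1) * y ^ (p.2 + 1))
        + (∑' j : ℕ, (q0 j : ℂ) * y ^ (j + 1)) + ∑' i : ℕ, (qt i : ℂ) * x ^ i‖
        ≤ ‖∑' p : ℕ × ℕ, (q p : ℂ) * x ^ (p.1 + 1) * y ^ (p.2 + 1)‖
          + ‖∑' j : ℕ, (q0 j : ℂ) * y ^ (j + 1)‖
          + ‖∑' i : ℕ, (qt i : ℂ) * x ^ i‖ := by
          exact le_trans (norm_add_le _ _)
            (add_le_add_left (norm_add_le _ _) _)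
      _ ≤ (∑' p : ℕ × ℕ, q p) + (∑' j : ℕ, q0 j) + ∑' i : ℕ, qt i := by
          gcongr
          · exact le_trans (norm_tsum_le_tsum_norm hs1.norm)
              (Summable.tsum_le_tsum hb1 hs1.norm hq)
          · exact le_trans (norm_tsum_le_tsum_norm hs2.norm)
              (Summable.tsum_le_tsum hb2 hs2.norm hq0)
          · exact le_trans (norm_tsum_le_tsum_norm hs3.norm)
              (Summable.tsum_le_tsum hb3 hs3.norm hqt)
  -- summability of the qr complex series
  have hsr : Summable (fun i : ℕ => (qr i : ℂ) * (1 - x ^ (i + 1))) := by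
    apply Summable.of_norm
    apply (hqr.mul_left 2).of_nonneg_of_le (fun _ => norm_nonneg _)
    intro i
    rw [norm_mul, Complex.norm_real, Real.norm_of_nonneg (hqrnn i)]
    calc qr i * ‖1 - x ^ (i + 1)‖ ≤ qr i * (‖(1 : ℂ)‖ + ‖x ^ (i + 1)‖) :=
          mul_le_mul_of_nonneg_left (norm_sub_le _ _) (hqrnn i)
      _ ≤ qr i * (1 + 1) := by
          have := hxp (i + 1)
          apply mul_le_mul_of_nonneg_left _ (hqrnn i)
          rw [norm_one]
          linarith
      _ = 2 * qr i := by ring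
  -- |f| ≥ θ + S
  have hfge : θ + S ≤ ‖f x y‖ := by
    rw [hf, norm_mul, hy, one_mul]
    have hre : ((θ : ℂ) + (∑' i : ℕ, (qr i : ℂ) * (1 - x ^ (i + 1))) + (S : ℂ)).re
        = θ + (∑' i : ℕ, qr i * (1 - (x ^ (i + 1)).re)) + S := by
      rw [Complex.add_re, Complex.add_re, Complex.ofReal_re, Complex.ofReal_re,
        Complex.re_tsum hsr]
      congr 2
      exact tsum_congr fun i => by
        simp [Complex.mul_re, Complex.sub_re, Complex.one_re, Complex.sub_im,
          Complex.one_im]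
    have h1 : θ + S ≤ ((θ : ℂ) + (∑' i : ℕ, (qr i : ℂ) * (1 - x ^ (i + 1))) + (S : ℂ)).re := by
      rw [hre]
      have h2 : 0 ≤ ∑' i : ℕ, qr i * (1 - (x ^ (i + 1)).re) := by
        apply tsum_nonneg
        intro i
        apply mul_nonneg (hqrnn i)
        have := (Complex.re_le_norm (x ^ (i + 1))).trans (hxp (i + 1))
        linarith
      linarith
    exact h1.trans (Complex.re_le_norm _)
  calc ‖g x y‖ ≤ S := hgle
    _ < θ + S := by linarith
    _ ≤ ‖f x y‖ := hfge
end

section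
/- For every complex x with |x| = 1 and x ≠ 1, the function y ↦ G_0(x,y) := f(x,y) − g(x,y) has exactly one zero in the open unit disc; that is, there exists a unique complex number y with |y| < 1 such that f(x,y) = g(x,y). -/
open Metric Set Complex

noncomputable def moeb (a z : ℂ) : ℂ := (a - z) / (1 - (starRingEnd ℂ) a * z)

lemma moeb_denom_ne (a z : ℂ) (ha : ‖a‖ < 1) (hz : ‖z‖ ≤ 1) :
    (1 : ℂ) - (starRingEnd ℂ) a * z ≠ 0 := by
  intro h
  have h1 : (1 : ℂ) = (starRingEnd ℂ) a * z := by linear_combination h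
  have : (1 : ℝ) = ‖(starRingEnd ℂ) a * z‖ := by
    rw [← h1]; simp
  rw [norm_mul, Complex.norm_conj] at this
  nlinarith [norm_nonneg a, norm_nonneg z]

lemma moeb_key (a z : ℂ) :
    Complex.normSq (1 - (starRingEnd ℂ) a * z) - Complex.normSq (a - z)
      = (1 - Complex.normSq a) * (1 - Complex.normSq z) := by
  simp [Complex.normSq_apply, Complex.mul_re, Complex.mul_im]
  ring

lemma moeb_mem_ball (a z : ℂ) (ha : ‖a‖ < 1) (hz : ‖z‖ < 1) :
    ‖moeb a z‖ < 1 := by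
  have key := moeb_key a z
  have hna : Complex.normSq a < 1 := by
    rw [← Complex.sq_norm]; nlinarith [norm_nonneg a]
  have hnz : Complex.normSq z < 1 := by
    rw [← Complex.sq_norm]; nlinarith [norm_nonneg z]
  have hpos : Complex.normSq (a - z) < Complex.normSq (1 - (starRingEnd ℂ) a * z) := by
    nlinarith
  have hd : 0 < ‖1 - (starRingEnd ℂ) a * z‖ := by
    have := Complex.normSq_nonneg (a - z)
    rw [Complex.norm_def]
    exact Real.sqrt_pos.2 (by linarith)
  rw [moeb, norm_div, div_lt_one hd]
  rw [Complex.norm_def, Complex.norm_def]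
  exact Real.sqrt_lt_sqrt (Complex.normSq_nonneg _) hpos

lemma moeb_self (a : ℂ) : moeb a a = 0 := by simp [moeb]

lemma moeb_invol (a z : ℂ) (ha : ‖a‖ < 1) (hz : ‖z‖ < 1) :
    moeb a (moeb a z) = z := by
  have hd1 : (1 : ℂ) - (starRingEnd ℂ) a * z ≠ 0 := moeb_denom_ne a z ha hz.le
  have hd2 : (1 : ℂ) - (starRingEnd ℂ) a * a ≠ 0 := moeb_denom_ne a a ha ha.le
  have hv : (1 : ℂ) - (starRingEnd ℂ) a * moeb a z
      = (1 - (starRingEnd ℂ) a * a) / (1 - (starRingEnd ℂ) a * z) := by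
    rw [moeb]; field_simp; ring
  rw [moeb, hv, moeb]
  rw [div_eq_iff (div_ne_zero hd2 hd1)]
  rw [mul_div_assoc', eq_div_iff hd1, sub_mul, div_mul_cancel₀ _ hd1]
  ring

lemma moeb_differentiableOn (a : ℂ) (ha : ‖a‖ < 1) :
    DifferentiableOn ℂ (fun z => moeb a z) (ball 0 1) := by
  apply DifferentiableOn.div
  · exact (differentiableOn_const a).sub differentiableOn_id
  · exact (differentiableOn_const 1).sub (differentiableOn_id.const_mul _)
  · intro z hz
    exact moeb_denom_ne a z ha (by simpa using (mem_ball_zero_iff.1 hz).le)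

lemma schwarz_pick (G : ℂ → ℂ) (hd : DifferentiableOn ℂ G (ball 0 1))
    (hm : MapsTo G (ball 0 1) (ball 0 1)) (a b : ℂ)
    (ha : ‖a‖ < 1) (hb : ‖b‖ < 1) :
    ‖moeb (G b) (G a)‖ ≤ ‖moeb b a‖ := by
  have hab : ∀ z : ℂ, ‖z‖ < 1 ↔ z ∈ ball (0:ℂ) 1 := by
    intro z; rw [mem_ball_zero_iff]
  have hGb : ‖G b‖ < 1 := (hab _).2 (hm ((hab b).1 hb))
  set ψ : ℂ → ℂ := fun z => moeb (G b) (G (moeb b z)) with hψ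
  have hmb : MapsTo (fun z => moeb b z) (ball (0:ℂ) 1) (ball (0:ℂ) 1) := by
    intro z hz; exact (hab _).1 (moeb_mem_ball b z hb ((hab z).2 hz))
  have hmGb : MapsTo (fun z => moeb (G b) z) (ball (0:ℂ) 1) (ball (0:ℂ) 1) := by
    intro z hz; exact (hab _).1 (moeb_mem_ball (G b) z hGb ((hab z).2 hz))
  have hdψ : DifferentiableOn ℂ ψ (ball 0 1) := by
    exact ((moeb_differentiableOn (G b) hGb).comp
      (hd.comp (moeb_differentiableOn b hb) hmb) (hm.comp hmb))
  have hmψ : MapsTo ψ (ball (0:ℂ) 1) (ball (0:ℂ) 1) :=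
    hmGb.comp (hm.comp hmb)
  have hψ0 : ψ 0 = 0 := by
    have : moeb b 0 = b := by simp [moeb]
    simp [hψ, this, moeb_self]
  have hz : ‖moeb b a‖ < 1 := moeb_mem_ball b a hb ha
  have := Complex.norm_le_norm_of_mapsTo_ball hdψ (hmψ.mono_right ball_subset_closedBall) hψ0 hz
  simp only [hψ] at this
  rwa [moeb_invol b a hb ha] at this

lemma scale_ineq (s : ℝ) (hs0 : 0 ≤ s) (hs1 : s ≤ 1) (w : ℂ) (hw : ‖w‖ ≤ 1) :
    (1 + s^2) * ‖1 - w‖ ≤ 2 * ‖1 - (s:ℂ)^2 * w‖ := by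
  set c := w.re with hc
  set t := Complex.normSq w with ht
  have hct : c^2 ≤ t := by rw [sq]; exact Complex.re_sq_le_normSq w
  have ht1 : t ≤ 1 := by
    rw [ht, ← Complex.sq_norm]; nlinarith [norm_nonneg w]
  have ht0 : 0 ≤ t := Complex.normSq_nonneg w
  have h2c : 0 ≤ 2*c + 1 + t := by nlinarith [sq_nonneg (1 - t)]
  have e1 : Complex.normSq (1 - w) = 1 - 2*c + t := by
    simp [Complex.normSq_apply, Complex.sub_re, Complex.sub_im, ht, hc]
    ring
  have e2 : Complex.normSq (1 - (s:ℂ)^2 * w) = 1 - 2*(s^2)*c + (s^2)^2*t := by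
    simp [Complex.normSq_apply, Complex.sub_re, Complex.sub_im, Complex.mul_re,
      Complex.mul_im, ht, hc, ← Complex.ofReal_pow, Complex.ofReal_re, Complex.ofReal_im]
    ring
  set u := s^2 with hu
  have h1u : (0:ℝ) ≤ 1 - u := by rw [hu]; nlinarith
  have h1pu : (0:ℝ) ≤ 1 + u := by rw [hu]; positivity
  have key : (1+u)^2 * Complex.normSq (1 - w) ≤ 4 * Complex.normSq (1 - (s:ℂ)^2 * w) := by
    rw [e1, e2]
    nlinarith [mul_nonneg (mul_nonneg h1u h1u) h2c,
      mul_nonneg (mul_nonneg h1u h1pu) (by linarith : (0:ℝ) ≤ 1 - t)]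
  have hA := norm_nonneg (1 - w)
  have hB := norm_nonneg (1 - (s:ℂ)^2 * w)
  have hA2 : ‖1-w‖^2 = Complex.normSq (1-w) := Complex.sq_norm _
  have hB2 : ‖1 - (s:ℂ)^2*w‖^2 = Complex.normSq (1 - (s:ℂ)^2*w) := Complex.sq_norm _
  nlinarith [key, hA, hB, sq_nonneg (2 * ‖1 - (s:ℂ)^2*w‖ - (1+u) * ‖1-w‖)]

lemma moeb_scale (s : ℝ) (hs0 : 0 < s) (hs1 : s < 1) (p q : ℂ)
    (hp : ‖p‖ < 1) (hq : ‖q‖ < 1) :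
    ‖moeb ((s:ℂ)*q) ((s:ℂ)*p)‖ ≤ (2*s/(1+s^2)) * ‖moeb q p‖ := by
  set w := (starRingEnd ℂ) q * p with hw
  have hwabs : ‖w‖ ≤ 1 := by
    rw [hw, norm_mul, Complex.norm_conj]
    nlinarith [norm_nonneg p, norm_nonneg q]
  have hwlt : ‖w‖ < 1 := by
    rw [hw, norm_mul, Complex.norm_conj]
    nlinarith [norm_nonneg p, norm_nonneg q, norm_nonneg w]
  have e1 : moeb ((s:ℂ)*q) ((s:ℂ)*p) = ((s:ℂ)*(q-p))/(1 - (s:ℂ)^2 * w) := by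
    rw [moeb, map_mul, Complex.conj_ofReal, hw]
    congr 1 <;> ring
  have hD2 : 0 < ‖1 - w‖ := by
    apply norm_pos_iff.mpr
    intro h
    have : w = 1 := by linear_combination -h
    rw [this] at hwlt; simp at hwlt
  have hD1 : 0 < ‖1 - (s:ℂ)^2 * w‖ := by
    apply norm_pos_iff.mpr
    intro h
    have h1 : (s:ℂ)^2 * w = 1 := by linear_combination -h
    have h2 : ‖(s:ℂ)^2 * w‖ = 1 := by rw [h1]; simp
    rw [norm_mul, norm_pow, Complex.norm_real, Real.norm_eq_abs, _root_.abs_of_pos hs0] at h2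
    nlinarith [norm_nonneg w]
  rw [e1, moeb, norm_div, norm_div, div_mul_div_comm]
  rw [div_le_div_iff₀ hD1 (by positivity)]
  have hs := scale_ineq s hs0.le hs1.le w hwabs
  have hqp : ‖(s:ℂ)*(q-p)‖ = s * ‖q - p‖ := by
    rw [norm_mul, Complex.norm_real, Real.norm_eq_abs, _root_.abs_of_pos hs0]
  rw [hqp]
  calc s * ‖q-p‖ * ((1+s^2) * ‖1 - w‖)
      ≤ s * ‖q-p‖ * (2 * ‖1 - (s:ℂ)^2 * w‖) := by
        apply mul_le_mul_of_nonneg_left hs (by positivity)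
    _ = 2*s*‖q-p‖ * ‖1 - (s:ℂ)^2*w‖ := by ring

lemma pow_succ_bound (ρ : ℝ) (h0 : 0 ≤ ρ) (h1 : ρ < 1) (k : ℕ) :
    (k + 1 : ℝ) * ρ ^ k ≤ (1 - ρ)⁻¹ := by
  have step1 : (k + 1 : ℝ) * ρ ^ k = ∑ i ∈ Finset.range (k+1), ρ ^ k := by
    rw [Finset.sum_const, Finset.card_range]; push_cast; ring
  have step2 : ∑ i ∈ Finset.range (k+1), ρ ^ k ≤ ∑ i ∈ Finset.range (k+1), ρ ^ i := by
    apply Finset.sum_le_sum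
    intro i hi
    exact pow_le_pow_of_le_one h0 h1.le (by simpa using Nat.lt_succ_iff.1 (Finset.mem_range.1 hi))
  have step3 : ∑ i ∈ Finset.range (k+1), ρ ^ i ≤ ∑' i : ℕ, ρ ^ i := by
    apply Summable.sum_le_tsum
    · intro i _; positivity
    · exact summable_geometric_of_lt_one h0 h1
  rw [tsum_geometric_of_lt_one h0 h1] at step3
  linarith

lemma diffOn_aux {ι : Type*} (c : ι → ℂ) (m : ι → ℕ)
    (hc : Summable (fun n => ‖c n‖)) :
    DifferentiableOn ℂ (fun y : ℂ => ∑' n, c n * y ^ (m n + 1)) (ball 0 1) := by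
  intro y hy
  apply DifferentiableAt.differentiableWithinAt
  have hy1 : ‖y‖ < 1 := by simpa using mem_ball_zero_iff.1 hy
  set ρ : ℝ := (1 + ‖y‖) / 2 with hρ
  have hay := norm_nonneg y
  have hρ0 : 0 < ρ := by rw [hρ]; linarith
  have hρ1 : ρ < 1 := by rw [hρ]; linarith
  have hyρ : ‖y‖ < ρ := by rw [hρ]; linarith
  have H := hasDerivAt_tsum_of_isPreconnected
    (u := fun n => ‖c n‖ * (1 - ρ)⁻¹)
    (g := fun n z => c n * z ^ (m n + 1))
    (g' := fun n z => c n * ((m n + 1) * z ^ (m n)))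
    (hc.mul_right _) isOpen_ball ((convex_ball (0:ℂ) ρ).isPreconnected)
    (fun n z _ => by
      have := (hasDerivAt_pow (m n + 1) z).const_mul (c n)
      simpa using this)
    (fun n z hz => by
      have hz' : ‖z‖ ≤ ρ := by
        exact (mem_ball_zero_iff.1 hz).le
      show ‖c n * (((m n : ℂ) + 1) * z ^ m n)‖ ≤ ‖c n‖ * (1 - ρ)⁻¹
      rw [norm_mul, norm_mul, norm_pow]
      have habs1 : ‖((m n : ℂ) + 1)‖ = (m n + 1 : ℝ) := by
        rw [show ((m n : ℂ) + 1) = ((m n + 1 : ℕ) : ℂ) by push_cast; ring,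
          Complex.norm_natCast]
        push_cast; ring
      rw [habs1]
      apply mul_le_mul_of_nonneg_left _ (norm_nonneg _)
      calc (m n + 1 : ℝ) * ‖z‖ ^ (m n)
          ≤ (m n + 1 : ℝ) * ρ ^ (m n) := by
            apply mul_le_mul_of_nonneg_left _ (by positivity)
            exact pow_le_pow_left₀ (norm_nonneg z) hz' _
        _ ≤ (1 - ρ)⁻¹ := pow_succ_bound ρ hρ0.le hρ1 _)
    (mem_ball_self hρ0)
    (summable_zero.congr (fun n => by simp))
    (mem_ball_zero_iff.2 (by exact hyρ))
  exact H.differentiableAt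

set_option maxHeartbeats 1000000



/-- for every `|x| = 1` with `x ≠ 1`, the function
`y ↦ G_0(x,y) = f(x,y) − g(x,y)` has exactly one zero in the open unit disc:
there is a unique `y` with `|y| < 1` and `f(x,y) = g(x,y)`.
(Same encoding of the rate families as in Statement 4.) -/
theorem stmt_5 (θ : ℝ) (hθ : 0 < θ)
    (q : ℕ × ℕ → ℝ) (q0 qr qt : ℕ → ℝ)
    (hq : Summable q) (hq0 : Summable q0) (hqr : Summable qr) (hqt : Summable qt)
    (hqnn : ∀ p, 0 ≤ q p) (hq0nn : ∀ j, 0 ≤ q0 j)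
    (hqrnn : ∀ i, 0 ≤ qr i) (hqtnn : ∀ i, 0 ≤ qt i)
    (S : ℝ) (hS : S = (∑' p : ℕ × ℕ, q p) + (∑' j : ℕ, q0 j) + ∑' i : ℕ, qt i)
    (f g : ℂ → ℂ → ℂ)
    (hf : ∀ x y, f x y
      = y * ((θ : ℂ) + (∑' i : ℕ, (qr i : ℂ) * (1 - x ^ (i + 1))) + (S : ℂ)))
    (hg : ∀ x y, g x y
      = (∑' p : ℕ × ℕ, (q p : ℂ) * x ^ (p.1 + 1) * y ^ (p.2 + 1))
        + (∑' j : ℕ, (q0 j : ℂ) * y ^ (j + 1)) + ∑' i : ℕ, (qt i : ℂ) * x ^ i)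
    (x : ℂ) (hx : ‖x‖ = 1) (hx1 : x ≠ 1) :
    ∃! y : ℂ, ‖y‖ < 1 ∧ f x y = g x y := by
  -- positivity of S
  have hS0 : 0 ≤ S := by
    rw [hS]
    have h1 : 0 ≤ ∑' p : ℕ × ℕ, q p := tsum_nonneg hqnn
    have h2 : 0 ≤ ∑' j : ℕ, q0 j := tsum_nonneg hq0nn
    have h3 : 0 ≤ ∑' i : ℕ, qt i := tsum_nonneg hqtnn
    linarith
  have hθS : 0 < θ + S := by linarith
  set C : ℂ := (θ : ℂ) + (∑' i : ℕ, (qr i : ℂ) * (1 - x ^ (i + 1))) + (S : ℂ) with hCdef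
  -- |C| ≥ θ + S
  have habsx : ∀ n : ℕ, ‖x ^ n‖ = 1 := fun n => by rw [norm_pow, hx, one_pow]
  have hsum_qr : Summable (fun i : ℕ => (qr i : ℂ) * (1 - x ^ (i + 1))) := by
    apply Summable.of_norm
    apply Summable.of_nonneg_of_le (fun i => norm_nonneg _) _ (hqr.mul_left 2)
    intro i
    calc ‖(qr i : ℂ) * (1 - x ^ (i + 1))‖ = ‖(qr i : ℂ)‖ * ‖1 - x ^ (i + 1)‖ := norm_mul _ _
      _ ≤ qr i * 2 := by
          apply mul_le_mul
          · rw [Complex.norm_real, Real.norm_eq_abs, _root_.abs_of_nonneg (hqrnn i)]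
          · calc ‖1 - x ^ (i+1)‖ ≤ ‖(1:ℂ)‖ + ‖x ^ (i+1)‖ := norm_sub_le _ _
              _ = 2 := by rw [norm_one, habsx]; norm_num
          · exact norm_nonneg _
          · exact hqrnn i
      _ = 2 * qr i := by ring
  have hCre : θ + S ≤ C.re := by
    rw [hCdef]
    simp only [Complex.add_re, Complex.ofReal_re]
    have : 0 ≤ (∑' i : ℕ, (qr i : ℂ) * (1 - x ^ (i + 1))).re := by
      rw [Complex.re_tsum hsum_qr]
      apply tsum_nonneg
      intro i
      rw [Complex.re_ofReal_mul]
      apply mul_nonneg (hqrnn i)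
      have := Complex.re_le_norm (x ^ (i+1))
      rw [habsx] at this
      simp only [Complex.sub_re, Complex.one_re]
      linarith
    linarith
  have habsC : θ + S ≤ ‖C‖ := le_trans hCre (Complex.re_le_norm C)
  have hC0 : C ≠ 0 := by
    intro h
    rw [h] at habsC; simp at habsC; linarith
  -- the three series summands of g
  set T1 : ℂ → ℂ := fun y => ∑' p : ℕ × ℕ, (q p : ℂ) * x ^ (p.1 + 1) * y ^ (p.2 + 1) with hT1
  set T2 : ℂ → ℂ := fun y => ∑' j : ℕ, (q0 j : ℂ) * y ^ (j + 1) with hT2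
  set T3 : ℂ := ∑' i : ℕ, (qt i : ℂ) * x ^ i with hT3
  set h : ℂ → ℂ := fun y => (T1 y + T2 y + T3) / C with hh
  -- bound |g x y| ≤ S
  have habs_c1 : ∀ p : ℕ × ℕ, ‖(q p : ℂ) * x ^ (p.1 + 1)‖ = q p := fun p => by
    rw [norm_mul, Complex.norm_real, Real.norm_eq_abs, habsx, _root_.abs_of_nonneg (hqnn p), mul_one]
  have hsum1 : ∀ y : ℂ, ‖y‖ ≤ 1 →
      Summable (fun p : ℕ × ℕ => ‖(q p : ℂ) * x ^ (p.1 + 1) * y ^ (p.2 + 1)‖) := by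
    intro y hy
    apply Summable.of_nonneg_of_le (fun p => norm_nonneg _) _ hq
    intro p
    rw [norm_mul, habs_c1, norm_pow]
    calc q p * ‖y‖ ^ (p.2+1) ≤ q p * 1 := by
          apply mul_le_mul_of_nonneg_left _ (hqnn p)
          exact pow_le_one₀ (norm_nonneg y) hy
      _ = q p := mul_one _
  have hsum2 : ∀ y : ℂ, ‖y‖ ≤ 1 →
      Summable (fun j : ℕ => ‖(q0 j : ℂ) * y ^ (j + 1)‖) := by
    intro y hy
    apply Summable.of_nonneg_of_le (fun j => norm_nonneg _) _ hq0
    intro j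
    rw [norm_mul, norm_pow, Complex.norm_real, Real.norm_eq_abs, _root_.abs_of_nonneg (hq0nn j)]
    calc q0 j * ‖y‖ ^ (j+1) ≤ q0 j * 1 := by
          apply mul_le_mul_of_nonneg_left _ (hq0nn j)
          exact pow_le_one₀ (norm_nonneg y) hy
      _ = q0 j := mul_one _
  have hsum3 : Summable (fun i : ℕ => ‖(qt i : ℂ) * x ^ i‖) := by
    apply Summable.of_nonneg_of_le (fun i => norm_nonneg _) _ hqt
    intro i
    rw [norm_mul, Complex.norm_real, Real.norm_eq_abs, _root_.abs_of_nonneg (hqtnn i), habsx, mul_one]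
  have hgb : ∀ y : ℂ, ‖y‖ ≤ 1 → ‖T1 y + T2 y + T3‖ ≤ S := by
    intro y hy
    have b1 : ‖T1 y‖ ≤ ∑' p : ℕ × ℕ, q p := by
      refine le_trans (norm_tsum_le_tsum_norm (hsum1 y hy)) ?_
      apply Summable.tsum_le_tsum _ (hsum1 y hy) hq
      intro p
      rw [norm_mul, habs_c1, norm_pow]
      calc q p * ‖y‖ ^ (p.2+1) ≤ q p * 1 := by
            apply mul_le_mul_of_nonneg_left _ (hqnn p)
            exact pow_le_one₀ (norm_nonneg y) hy
        _ = q p := mul_one _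
    have b2 : ‖T2 y‖ ≤ ∑' j : ℕ, q0 j := by
      refine le_trans (norm_tsum_le_tsum_norm (hsum2 y hy)) ?_
      apply Summable.tsum_le_tsum _ (hsum2 y hy) hq0
      intro j
      rw [norm_mul, norm_pow, Complex.norm_real, Real.norm_eq_abs, _root_.abs_of_nonneg (hq0nn j)]
      calc q0 j * ‖y‖ ^ (j+1) ≤ q0 j * 1 := by
            apply mul_le_mul_of_nonneg_left _ (hq0nn j)
            exact pow_le_one₀ (norm_nonneg y) hy
        _ = q0 j := mul_one _
    have b3 : ‖T3‖ ≤ ∑' i : ℕ, qt i := by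
      refine le_trans (norm_tsum_le_tsum_norm hsum3) ?_
      apply Summable.tsum_le_tsum _ hsum3 hqt
      intro i
      rw [norm_mul, Complex.norm_real, Real.norm_eq_abs, _root_.abs_of_nonneg (hqtnn i), habsx,
        mul_one]
    calc ‖T1 y + T2 y + T3‖
        ≤ ‖T1 y + T2 y‖ + ‖T3‖ := norm_add_le _ _
      _ ≤ ‖T1 y‖ + ‖T2 y‖ + ‖T3‖ := by
          have := norm_add_le (T1 y) (T2 y); linarith
      _ ≤ S := by rw [hS]; linarith
  -- parameters
  set s : ℝ := S / (θ + S) with hs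
  have hs0 : 0 ≤ s := div_nonneg hS0 hθS.le
  have hs1 : s < 1 := by rw [hs, div_lt_one hθS]; linarith
  set s' : ℝ := (s + 1) / 2 with hs'
  have hs'0 : 0 < s' := by rw [hs']; linarith
  have hs'1 : s' < 1 := by rw [hs']; linarith
  have hss' : s < s' := by rw [hs']; linarith
  set K : ℝ := 2 * s' / (1 + s' ^ 2) with hK
  have hK0 : 0 ≤ K := by positivity
  have hK1 : K < 1 := by
    rw [hK, div_lt_one (by positivity)]
    nlinarith [sq_nonneg (1 - s')]
  -- bound on h
  have hhb : ∀ y : ℂ, ‖y‖ ≤ 1 → ‖h y‖ ≤ s := by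
    intro y hy
    rw [hh]
    simp only [norm_div]
    rw [hs]
    exact div_le_div₀ hS0 (hgb y hy) hθS habsC
  -- differentiability of h
  have hdiff : DifferentiableOn ℂ h (ball 0 1) := by
    apply DifferentiableOn.div_const
    apply DifferentiableOn.add
    apply DifferentiableOn.add
    · have := diffOn_aux (fun p : ℕ × ℕ => (q p : ℂ) * x ^ (p.1 + 1)) (fun p => p.2)
        (hq.congr (fun p => (habs_c1 p).symm))
      exact this.congr (fun y _ => by rw [hT1])
    · have := diffOn_aux (fun j : ℕ => (q0 j : ℂ)) (fun j => j)
        (hq0.congr (fun j => by rw [Complex.norm_real, Real.norm_eq_abs, _root_.abs_of_nonneg (hq0nn j)]))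
      exact this.congr (fun y _ => by rw [hT2])
    · exact differentiableOn_const _
  -- contraction
  have hcontr : ∀ a b : ℂ, ‖a‖ < 1 → ‖b‖ < 1 →
      ‖moeb (h b) (h a)‖ ≤ K * ‖moeb b a‖ := by
    intro a b ha hb
    set G : ℂ → ℂ := fun y => h y / (s' : ℂ) with hG
    have hs'ne : (s' : ℂ) ≠ 0 := by
      simpa using ne_of_gt hs'0
    have hGabs : ∀ y : ℂ, ‖y‖ < 1 → ‖G y‖ < 1 := by
      intro y hy
      rw [hG]
      simp only [norm_div, Complex.norm_real, Real.norm_eq_abs, _root_.abs_of_pos hs'0]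
      rw [div_lt_one hs'0]
      exact lt_of_le_of_lt (hhb y hy.le) hss'
    have hGdiff : DifferentiableOn ℂ G (ball 0 1) := hdiff.div_const _
    have hGmaps : MapsTo G (ball 0 1) (ball 0 1) := by
      intro z hz
      rw [mem_ball_zero_iff]
      exact hGabs z (by exact mem_ball_zero_iff.1 hz)
    have hSP := schwarz_pick G hGdiff hGmaps a b ha hb
    have hMS := moeb_scale s' hs'0 hs'1 (G a) (G b) (hGabs a ha) (hGabs b hb)
    have hrec : ∀ y : ℂ, (s' : ℂ) * G y = h y := fun y => by
      rw [hG]; field_simp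
    rw [hrec, hrec] at hMS
    calc ‖moeb (h b) (h a)‖ ≤ K * ‖moeb (G b) (G a)‖ := hMS
      _ ≤ K * ‖moeb b a‖ := mul_le_mul_of_nonneg_left hSP hK0
  -- the iteration sequence
  set Y : ℕ → ℂ := fun n => h^[n] 0 with hY
  have hYsucc : ∀ n, Y (n + 1) = h (Y n) := fun n => by
    rw [hY]; exact Function.iterate_succ_apply' h n 0
  have hYb : ∀ n, ‖Y n‖ < 1 := by
    intro n
    induction n with
    | zero => simp [hY]
    | succ k ih =>
        rw [hYsucc]
        exact lt_of_le_of_lt (hhb (Y k) ih.le) hs1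
  have hestep : ∀ n, ‖moeb (Y (n+1)) (Y (n+2))‖
      ≤ K * ‖moeb (Y n) (Y (n+1))‖ := by
    intro n
    have H := hcontr (Y (n+1)) (Y n) (hYb (n+1)) (hYb n)
    rwa [← hYsucc (n+1), ← hYsucc n] at H
  have hegeo : ∀ n, ‖moeb (Y n) (Y (n+1))‖
      ≤ ‖moeb (Y 0) (Y 1)‖ * K ^ n := by
    intro n
    induction n with
    | zero => rw [pow_zero, mul_one]
    | succ k ih =>
        calc ‖moeb (Y (k+1)) (Y (k+2))‖
            ≤ K * ‖moeb (Y k) (Y (k+1))‖ := hestep k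
          _ ≤ K * (‖moeb (Y 0) (Y 1)‖ * K ^ k) :=
              mul_le_mul_of_nonneg_left ih hK0
          _ = ‖moeb (Y 0) (Y 1)‖ * K ^ (k+1) := by ring
  have hden : ∀ a b : ℂ, ‖a‖ < 1 → ‖b‖ < 1 →
      ‖a - b‖ ≤ 2 * ‖moeb a b‖ := by
    intro a b ha hb
    have hd : (1 : ℂ) - (starRingEnd ℂ) a * b ≠ 0 := moeb_denom_ne a b ha hb.le
    have h2 : ‖1 - (starRingEnd ℂ) a * b‖ ≤ 2 := by
      calc ‖1 - (starRingEnd ℂ) a * b‖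
          ≤ ‖(1:ℂ)‖ + ‖(starRingEnd ℂ) a * b‖ := norm_sub_le _ _
        _ ≤ 2 := by
            rw [norm_mul, Complex.norm_conj, norm_one]
            nlinarith [norm_nonneg a, norm_nonneg b]
    have : ‖a - b‖
        = ‖moeb a b‖ * ‖1 - (starRingEnd ℂ) a * b‖ := by
      rw [moeb, norm_div, div_mul_cancel₀]
      exact norm_ne_zero_iff.mpr hd
    rw [this]
    calc ‖moeb a b‖ * ‖1 - (starRingEnd ℂ) a * b‖
        ≤ ‖moeb a b‖ * 2 := mul_le_mul_of_nonneg_left h2 (norm_nonneg _)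
      _ = 2 * ‖moeb a b‖ := by ring
  have hdist : ∀ n, dist (Y n) (Y (n + 1))
      ≤ (2 * ‖moeb (Y 0) (Y 1)‖) * K ^ n := by
    intro n
    rw [Complex.dist_eq]
    calc ‖Y n - Y (n+1)‖ ≤ 2 * ‖moeb (Y n) (Y (n+1))‖ :=
          hden (Y n) (Y (n+1)) (hYb n) (hYb (n+1))
      _ ≤ 2 * (‖moeb (Y 0) (Y 1)‖ * K ^ n) := by
          have := hegeo n; linarith
      _ = (2 * ‖moeb (Y 0) (Y 1)‖) * K ^ n := by ring
  have hcauchy : CauchySeq Y :=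
    cauchySeq_of_le_geometric K (2 * ‖moeb (Y 0) (Y 1)‖) hK1 hdist
  obtain ⟨L, hL⟩ := cauchySeq_tendsto_of_complete hcauchy
  have hLs : ‖L‖ ≤ s := by
    have hmem : ∀ᶠ n in Filter.atTop, Y n ∈ closedBall (0 : ℂ) s := by
      rw [Filter.eventually_atTop]
      refine ⟨1, fun n hn => ?_⟩
      obtain ⟨k, rfl⟩ := Nat.exists_eq_add_of_le hn
      rw [mem_closedBall_zero_iff, add_comm, hYsucc]
      exact hhb (Y k) (hYb k).le
    have := Metric.isClosed_closedBall.mem_of_tendsto hL hmem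
    rwa [mem_closedBall_zero_iff] at this
  have hL1 : ‖L‖ < 1 := lt_of_le_of_lt hLs hs1
  have hfix : h L = L := by
    have hcont : ContinuousAt h L := by
      apply hdiff.continuousOn.continuousAt
      exact isOpen_ball.mem_nhds (mem_ball_zero_iff.2 (by exact hL1))
    have h1 : Filter.Tendsto (fun n => h (Y n)) Filter.atTop (nhds (h L)) :=
      (hcont.tendsto).comp hL
    have h2 : Filter.Tendsto (fun n => Y (n + 1)) Filter.atTop (nhds L) :=
      hL.comp (Filter.tendsto_add_atTop_nat 1)
    have h3 : (fun n => h (Y n)) = fun n => Y (n + 1) := by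
      funext n; rw [hYsucc]
    rw [h3] at h1
    exact tendsto_nhds_unique h1 h2
  -- equation ↔ fixed point
  have hiff : ∀ y : ℂ, f x y = g x y ↔ h y = y := by
    intro y
    rw [hf, hg, ← hCdef]
    show y * C = T1 y + T2 y + T3 ↔ (T1 y + T2 y + T3) / C = y
    rw [div_eq_iff hC0]
    exact eq_comm
  refine ⟨L, ⟨hL1, (hiff L).2 hfix⟩, ?_⟩
  intro y' hy'
  obtain ⟨hy'1, hy'eq⟩ := hy'
  have hfix' : h y' = y' := (hiff y').1 hy'eq
  have := hcontr y' L hy'1 hL1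
  rw [hfix, hfix'] at this
  have hzero : ‖moeb L y'‖ = 0 := by
    nlinarith [norm_nonneg (moeb L y')]
  have hd : (1 : ℂ) - (starRingEnd ℂ) L * y' ≠ 0 := moeb_denom_ne L y' hL1 hy'1.le
  rw [moeb] at hzero
  have := norm_eq_zero.1 hzero
  rw [div_eq_zero_iff] at this
  rcases this with h1 | h2
  · have : L = y' := by linear_combination h1
    exact this.symm
  · exact absurd h2 hd
end

section
/- Define R(x,y) = xy·D_0(x,y) + y[q_{−1,0}(x − 1) + q_{−1,1}(x − y)] + x[q_{0,−1}(y − 1) + q_{1,−1}(y − x)]. Then for all complex g, s with |g| ≤ 1 and |s| = 1 one has the factorization R(gs, gs^{−1}) = g·[g·Δ(g,s) − (q_{−1,0} s^{−1} + q_{0,−1} s)], and for each s with |s| = 1 there exists a unique complex g with |g| < 1 satisfying g·Δ(g,s) = q_{−1,0} s^{−1} + q_{0,−1} s. Consequently, the zeros of g ↦ R(gs, gs^{−1}) in the open unit disc |g| < 1 are exactly g = 0 together with this unique solution. -/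
open Complex Polynomial Metric Real Set

private lemma circleIntegral_add' {f g : ℂ → ℂ} {c : ℂ} {R : ℝ}
    (hf : CircleIntegrable f c R) (hg : CircleIntegrable g c R) :
    (∮ z in C(c, R), (f z + g z)) = (∮ z in C(c, R), f z) + ∮ z in C(c, R), g z := by
  simp only [circleIntegral, smul_add, intervalIntegral.integral_add hf.out hg.out]

private lemma contOn_sum_inv (M : Multiset ℂ) (hM : ∀ r ∈ M, ‖r‖ ≠ 1) :
    ContinuousOn (fun z => (M.map (fun r => (z - r)⁻¹)).sum) (sphere (0:ℂ) 1) := by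
  induction M using Multiset.induction_on with
  | empty => simp [continuousOn_const]
  | cons a M ih =>
    simp only [Multiset.map_cons, Multiset.sum_cons]
    apply ContinuousOn.add
    · apply ContinuousOn.inv₀ (continuousOn_id.sub continuousOn_const)
      intro z hz
      have hz1 : ‖z‖ = 1 := by
        simpa using mem_sphere_zero_iff_norm.mp hz
      have ha : ‖a‖ ≠ 1 := hM a (Multiset.mem_cons_self _ _)
      exact sub_ne_zero.mpr (fun h => ha ((show z = a from h) ▸ hz1))
    · exact ih (fun r hr => hM r (Multiset.mem_cons_of_mem hr))

private lemma integral_sum_inv (M : Multiset ℂ) (hM : ∀ r ∈ M, ‖r‖ ≠ 1) :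
    (∮ z in C((0:ℂ), 1), (M.map (fun r => (z - r)⁻¹)).sum)
      = ((M.filter (fun r => ‖r‖ < 1)).card : ℂ) * (2 * π * I) := by
  induction M using Multiset.induction_on with
  | empty =>
    simp only [Multiset.map_zero, Multiset.sum_zero, Multiset.filter_zero, Multiset.card_zero,
      Nat.cast_zero, zero_mul]
    simp [circleIntegral]
  | cons a M ih =>
    have ha : ‖a‖ ≠ 1 := hM a (Multiset.mem_cons_self _ _)
    have hM' : ∀ r ∈ M, ‖r‖ ≠ 1 := fun r hr => hM r (Multiset.mem_cons_of_mem hr)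
    have h1 : CircleIntegrable (fun z : ℂ => (z - a)⁻¹) 0 1 := by
      apply ContinuousOn.circleIntegrable zero_le_one
      apply ContinuousOn.inv₀ (continuousOn_id.sub continuousOn_const)
      intro z hz
      have hz1 : ‖z‖ = 1 := by
        simpa using mem_sphere_zero_iff_norm.mp hz
      exact sub_ne_zero.mpr (fun h => ha ((show z = a from h) ▸ hz1))
    have h2 : CircleIntegrable (fun z : ℂ => (M.map (fun r => (z - r)⁻¹)).sum) 0 1 :=
      ContinuousOn.circleIntegrable zero_le_one (contOn_sum_inv M hM')
    simp only [Multiset.map_cons, Multiset.sum_cons]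
    rw [circleIntegral_add' h1 h2, ih hM']
    rcases lt_or_gt_of_ne ha with hlt | hgt
    · rw [circleIntegral.integral_sub_inv_of_mem_ball (by simpa using hlt)]
      rw [Multiset.filter_cons_of_pos _ (by simpa using hlt)]
      simp only [Multiset.card_cons]
      push_cast
      ring
    · have hout : (∮ z in C((0:ℂ), 1), (z - a)⁻¹) = 0 := by
        apply circleIntegral_eq_zero_of_differentiable_on_off_countable zero_le_one
          Set.countable_empty
        · apply ContinuousOn.inv₀ (continuousOn_id.sub continuousOn_const)
          intro z hz
          have hzb : ‖z‖ ≤ 1 := by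
            simpa using mem_closedBall_zero_iff.mp hz
          exact sub_ne_zero.mpr (fun h => absurd ((show z = a from h) ▸ hzb) (not_le.mpr hgt))
        · intro z hz
          have hzb : ‖z‖ < 1 := by
            simpa using mem_ball_zero_iff.mp hz.1
          exact (differentiableAt_id.sub (differentiableAt_const a)).inv
            (sub_ne_zero.mpr (fun h => absurd ((show z = a from h) ▸ hzb) (lt_asymm hgt)))
      rw [hout, Multiset.filter_cons_of_neg _ (by simpa using not_lt.mpr hgt.le)]
      ring

private lemma logDeriv_eval (L : ℂ) (M : Multiset ℂ) (z : ℂ)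
    (hz : eval z (C L * (M.map fun a => X - C a).prod) ≠ 0) :
    eval z (derivative (C L * (M.map fun a => X - C a).prod))
      = eval z (C L * (M.map fun a => X - C a).prod) * (M.map fun r => (z - r)⁻¹).sum := by
  induction M using Multiset.induction_on with
  | empty => simp
  | cons a M ih =>
    have hfac : C L * ((a ::ₘ M).map fun a => X - C a).prod
        = (X - C a) * (C L * (M.map fun a => X - C a).prod) := by
      rw [Multiset.map_cons, Multiset.prod_cons]; ring
    rw [hfac] at hz ⊢
    set Q : Polynomial ℂ := C L * (M.map fun a => X - C a).prod with hQdef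
    have hza : (z - a) ≠ 0 := by
      intro h; apply hz; rw [eval_mul, eval_sub, eval_X, eval_C, h, zero_mul]
    have hQ : eval z Q ≠ 0 := by
      intro h; apply hz; rw [eval_mul, h, mul_zero]
    simp only [derivative_mul, derivative_sub, derivative_X, derivative_C, sub_zero, one_mul,
      eval_add, eval_mul, eval_sub, eval_X, eval_C, Multiset.map_cons, Multiset.sum_cons]
    rw [ih hQ]
    field_simp

private lemma core_lemma (A B K c : ℂ) (ε : ℝ) (hε : 0 < ε)
    (hb : ∀ z : ℂ, ‖z‖ = 1 → ε ≤ (A - B*z - K*z^2 - c*z⁻¹).re) :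
    ∃! g : ℂ, ‖g‖ < 1 ∧ A*g - B*g^2 - K*g^3 - c = 0 := by
  have hzne : ∀ z : ℂ, ‖z‖ = 1 → z ≠ 0 := by
    intro z hz h; rw [h] at hz; simp at hz
  have hHne : ∀ z : ℂ, ‖z‖ = 1 → A - B*z - K*z^2 - c*z⁻¹ ≠ 0 := by
    intro z hz h
    have h2 := hb z hz
    rw [h] at h2; simp at h2; linarith
  set P : Polynomial ℂ := C A * X - C B * X^2 - C K * X^3 - C c with hPdef
  have hevalP : ∀ z : ℂ, eval z P = A*z - B*z^2 - K*z^3 - c := by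
    intro z
    simp only [hPdef, eval_sub, eval_mul, eval_pow, eval_C, eval_X]
  have hPcirc : ∀ z : ℂ, ‖z‖ = 1 → eval z P ≠ 0 := by
    intro z hz
    have h0 := hzne z hz
    have hrw : eval z P = z * (A - B*z - K*z^2 - c*z⁻¹) := by
      rw [hevalP]; field_simp
    rw [hrw]
    exact mul_ne_zero h0 (hHne z hz)
  have hP0 : P ≠ 0 := by
    intro h
    exact hPcirc 1 (by simp) (by rw [h, eval_zero])
  have hsplit : P = C P.leadingCoeff * (P.roots.map fun a => X - C a).prod :=
    (IsAlgClosed.splits P).eq_prod_roots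
  have hMcirc : ∀ r ∈ P.roots, ‖r‖ ≠ 1 := by
    intro r hr h1
    exact hPcirc r h1 (mem_roots'.mp hr).2
  have hkey : Set.EqOn (fun z => (P.roots.map fun r => (z - r)⁻¹).sum)
      (fun z => z⁻¹ + (-B - 2*K*z + c*(z^2)⁻¹)/(A - B*z - K*z^2 - c*z⁻¹))
      (sphere (0:ℂ) 1) := by
    intro z hz
    have hz1 : ‖z‖ = 1 := by
      simpa using mem_sphere_zero_iff_norm.mp hz
    have hz0 := hzne z hz1
    have hH := hHne z hz1
    have hPz := hPcirc z hz1
    have h1 := logDeriv_eval P.leadingCoeff P.roots z (by rw [← hsplit]; exact hPz)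
    rw [← hsplit] at h1
    have hD : eval z (derivative P) = A - 2*B*z - 3*K*z^2 := by
      simp only [hPdef, derivative_sub, derivative_C_mul, derivative_X_pow, derivative_X,
        derivative_C, eval_sub, eval_mul, eval_pow, eval_C, eval_X, eval_one, eval_zero]
      push_cast
      ring
    rw [hD, hevalP] at h1
    have hPzz : A*z - B*z^2 - K*z^3 - c ≠ 0 := by rw [← hevalP]; exact hPz
    have hS : (P.roots.map fun r => (z - r)⁻¹).sum
        = (A - 2*B*z - 3*K*z^2) / (A*z - B*z^2 - K*z^3 - c) := by
      rw [eq_div_iff hPzz]; linear_combination -h1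
    show (P.roots.map fun r => (z - r)⁻¹).sum
        = z⁻¹ + (-B - 2*K*z + c*(z^2)⁻¹)/(A - B*z - K*z^2 - c*z⁻¹)
    have hkey2 : A - 2*B*z - 3*K*z^2 = (A - B*z - K*z^2 - c*z⁻¹)
        + z * (-B - 2*K*z + c*(z^2)⁻¹) := by
      field_simp
      ring
    have hp : A*z - B*z^2 - K*z^3 - c = z * (A - B*z - K*z^2 - c*z⁻¹) := by
      field_simp
    rw [hS, hkey2, hp, add_div, mul_div_mul_left _ _ hz0, div_mul_eq_div_div_swap,
      div_self hH, one_div]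
  have hsne : ∀ z ∈ sphere (0:ℂ) 1, z ≠ 0 := by
    intro z hz
    apply hzne
    simpa using mem_sphere_zero_iff_norm.mp hz
  have hsabs : ∀ z ∈ sphere (0:ℂ) 1, ‖z‖ = 1 := by
    intro z hz
    simpa using mem_sphere_zero_iff_norm.mp hz
  have hJcont : ContinuousOn (fun z : ℂ => -B - 2*K*z + c*(z^2)⁻¹) (sphere (0:ℂ) 1) := by
    apply ContinuousOn.add
    · exact (continuousOn_const.sub (continuousOn_const.mul continuousOn_id))
    · exact continuousOn_const.mul ((continuousOn_id.pow 2).inv₀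
        (fun z hz => pow_ne_zero 2 (hsne z hz)))
  have hHcont : ContinuousOn (fun z : ℂ => A - B*z - K*z^2 - c*z⁻¹) (sphere (0:ℂ) 1) := by
    apply ContinuousOn.sub
    · apply ContinuousOn.sub
      · exact continuousOn_const.sub (continuousOn_const.mul continuousOn_id)
      · exact continuousOn_const.mul (continuousOn_id.pow 2)
    · exact continuousOn_const.mul (continuousOn_id.inv₀ hsne)
  have hJH_int : CircleIntegrable
      (fun z : ℂ => z⁻¹ + (-B - 2*K*z + c*(z^2)⁻¹)/(A - B*z - K*z^2 - c*z⁻¹)) 0 1 := by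
    apply ContinuousOn.circleIntegrable zero_le_one
    apply ContinuousOn.add (continuousOn_id.inv₀ hsne)
    exact hJcont.div hHcont (fun z hz => hHne z (hsabs z hz))
  have hinv_int : CircleIntegrable (fun z : ℂ => z⁻¹) 0 1 :=
    ContinuousOn.circleIntegrable zero_le_one (continuousOn_id.inv₀ hsne)
  have hdiv_int : CircleIntegrable
      (fun z : ℂ => (-B - 2*K*z + c*(z^2)⁻¹)/(A - B*z - K*z^2 - c*z⁻¹)) 0 1 :=
    ContinuousOn.circleIntegrable zero_le_one
      (hJcont.div hHcont (fun z hz => hHne z (hsabs z hz)))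
  have hinv_val : (∮ z in C((0:ℂ), 1), z⁻¹) = 2*π*I := by
    have h := circleIntegral.integral_sub_inv_of_mem_ball
      (c := (0:ℂ)) (w := 0) (R := 1) (by simp)
    simpa using h
  have hJH_val : (∮ z in C((0:ℂ), 1),
      (-B - 2*K*z + c*(z^2)⁻¹)/(A - B*z - K*z^2 - c*z⁻¹)) = 0 := by
    have hγabs : ∀ θ : ℝ, ‖circleMap 0 1 θ‖ = 1 := by
      intro θ; simpa using norm_circleMap_zero 1 θ
    have hγ0 : ∀ θ : ℝ, circleMap 0 1 θ ≠ 0 := fun θ => hzne _ (hγabs θ)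
    have hders : ∀ θ : ℝ, HasDerivAt
        (fun t : ℝ => Complex.log (A - B*(circleMap 0 1 t) - K*(circleMap 0 1 t)^2
          - c*(circleMap 0 1 t)⁻¹))
        (deriv (circleMap 0 1) θ • ((-B - 2*K*(circleMap 0 1 θ) + c*((circleMap 0 1 θ)^2)⁻¹)
          /(A - B*(circleMap 0 1 θ) - K*(circleMap 0 1 θ)^2 - c*(circleMap 0 1 θ)⁻¹))) θ := by
      intro θ
      set w : ℂ := circleMap 0 1 θ with hw
      have hγd : HasDerivAt (circleMap 0 1) (w * I) θ := by
        simpa using hasDerivAt_circleMap 0 1 θ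
      have hH : HasDerivAt (fun u : ℂ => A - B*u - K*u^2 - c*u⁻¹)
          (-B - 2*K*w + c*(w^2)⁻¹) w := by
        have hinv : HasDerivAt (fun u : ℂ => u⁻¹) (-(w^2)⁻¹) w := hasDerivAt_inv (hγ0 θ)
        have h2 : HasDerivAt (fun u : ℂ => A - B*u - K*u^2 - c*u⁻¹)
            (0 - B*1 - K*(2*w^1) - c*(-(w^2)⁻¹)) w := by
          exact (((hasDerivAt_const w A).sub ((hasDerivAt_id w).const_mul B)).sub
            ((hasDerivAt_pow 2 w).const_mul K)).sub (hinv.const_mul c)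
        convert h2 using 1
        ring
      have hcomp : HasDerivAt (fun t : ℝ => A - B*(circleMap 0 1 t) - K*(circleMap 0 1 t)^2
          - c*(circleMap 0 1 t)⁻¹) ((-B - 2*K*w + c*(w^2)⁻¹) * (w * I)) θ := by
        exact HasDerivAt.comp θ hH hγd
      have hslit : (A - B*w - K*w^2 - c*w⁻¹) ∈ Complex.slitPlane := by
        apply Complex.mem_slitPlane_iff.mpr
        left
        exact lt_of_lt_of_le hε (hb w (hγabs θ))
      have hclog := hcomp.clog_real hslit
      convert hclog using 1
      rw [deriv_circleMap]
      simp only [smul_eq_mul, zero_add]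
      ring
    have hcont : Continuous (fun θ : ℝ => deriv (circleMap 0 1) θ •
        ((-B - 2*K*(circleMap 0 1 θ) + c*((circleMap 0 1 θ)^2)⁻¹)
          /(A - B*(circleMap 0 1 θ) - K*(circleMap 0 1 θ)^2 - c*(circleMap 0 1 θ)⁻¹))) := by
      have hγc : Continuous (circleMap 0 1) := continuous_circleMap 0 1
      have hd : (fun θ : ℝ => deriv (circleMap 0 1) θ) = fun θ => circleMap 0 1 θ * I := by
        funext θ; exact deriv_circleMap 0 1 θ
      simp only [smul_eq_mul, hd]
      apply Continuous.mul (hγc.mul continuous_const)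
      apply Continuous.div
      · exact (continuous_const.sub (continuous_const.mul hγc)).add
          (continuous_const.mul ((hγc.pow 2).inv₀ (fun θ => pow_ne_zero 2 (hγ0 θ))))
      · exact ((continuous_const.sub (continuous_const.mul hγc)).sub
          (continuous_const.mul (hγc.pow 2))).sub
          (continuous_const.mul (hγc.inv₀ hγ0))
      · intro θ
        exact hHne _ (hγabs θ)
    have hF : (∮ z in C((0:ℂ), 1),
        (-B - 2*K*z + c*(z^2)⁻¹)/(A - B*z - K*z^2 - c*z⁻¹))
        = ∫ θ in (0:ℝ)..(2*π), deriv (circleMap 0 1) θ •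
          ((-B - 2*K*(circleMap 0 1 θ) + c*((circleMap 0 1 θ)^2)⁻¹)
            /(A - B*(circleMap 0 1 θ) - K*(circleMap 0 1 θ)^2 - c*(circleMap 0 1 θ)⁻¹)) := rfl
    rw [hF]
    rw [intervalIntegral.integral_eq_sub_of_hasDerivAt (fun θ _ => hders θ)
      (hcont.intervalIntegrable 0 (2*π))]
    have hper : circleMap 0 1 (2*π) = circleMap 0 1 0 := by
      have := periodic_circleMap 0 1 0
      simpa using this
    rw [hper, sub_self]
  have hcount : ((P.roots.filter (fun r => ‖r‖ < 1)).card : ℂ) * (2*π*I) = 2*π*I := by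
    rw [← integral_sum_inv P.roots hMcirc,
      circleIntegral.integral_congr zero_le_one hkey,
      circleIntegral_add' hinv_int hdiv_int, hinv_val, hJH_val, add_zero]
  have hcard : (P.roots.filter (fun r => ‖r‖ < 1)).card = 1 := by
    have h2 : ((P.roots.filter (fun r => ‖r‖ < 1)).card : ℂ) = 1 :=
      mul_right_cancel₀ Complex.two_pi_I_ne_zero (by rw [hcount, one_mul])
    exact_mod_cast h2
  obtain ⟨a, ha⟩ := Multiset.card_eq_one.mp hcard
  have haf : a ∈ P.roots.filter (fun r => ‖r‖ < 1) := by
    rw [ha]; exact Multiset.mem_singleton_self a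
  obtain ⟨ham, habs⟩ := Multiset.mem_filter.mp haf
  have haroot : A*a - B*a^2 - K*a^3 - c = 0 := by
    rw [← hevalP]; exact (mem_roots'.mp ham).2
  refine ⟨a, ⟨habs, haroot⟩, ?_⟩
  intro g hg
  have hgroot : g ∈ P.roots := mem_roots'.mpr ⟨hP0, by rw [IsRoot, hevalP]; exact hg.2⟩
  have hgf : g ∈ P.roots.filter (fun r => ‖r‖ < 1) :=
    Multiset.mem_filter.mpr ⟨hgroot, hg.1⟩
  rw [ha] at hgf
  exact Multiset.mem_singleton.mp hgf



/-- with `R(x,y) = xy·D₀(x,y) + y[q_{−1,0}(x−1)+q_{−1,1}(x−y)]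
+ x[q_{0,−1}(y−1)+q_{1,−1}(y−x)]`, one has for `|g| ≤ 1`, `|s| = 1` the factorization
`R(gs, gs⁻¹) = g(g·Δ(g,s) − (q_{−1,0}s⁻¹ + q_{0,−1}s))`; for each `|s| = 1` there is a
unique `|g| < 1` with `g·Δ(g,s) = q_{−1,0}s⁻¹ + q_{0,−1}s`; and the zeros of
`g ↦ R(gs,gs⁻¹)` in `|g| < 1` are exactly `g = 0` together with this unique solution. -/
theorem stmt_8 (q01 q10 q11 qm10 qm11 q0m1 q1m1 θ : ℝ)
    (h01 : 0 ≤ q01) (h10 : 0 ≤ q10) (h11 : 0 ≤ q11)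
    (hm10 : 0 ≤ qm10) (hm11 : 0 ≤ qm11) (h0m1 : 0 ≤ q0m1) (h1m1 : 0 ≤ q1m1)
    (hθ : 0 < θ)
    (D0 : ℂ → ℂ → ℂ)
    (hD0 : ∀ x y, D0 x y
      = (q10 : ℂ) * (1 - x) + (q01 : ℂ) * (1 - y) + (q11 : ℂ) * (1 - x * y) + (θ : ℂ))
    (Δ : ℂ → ℂ → ℂ)
    (hΔ : ∀ g s, Δ g s = D0 (g * s) (g * s⁻¹) + (qm10 : ℂ) + (q0m1 : ℂ)
      + (qm11 : ℂ) * (1 - (s⁻¹) ^ 2) + (q1m1 : ℂ) * (1 - s ^ 2))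
    (R : ℂ → ℂ → ℂ)
    (hR : ∀ x y, R x y = x * y * D0 x y
      + y * ((qm10 : ℂ) * (x - 1) + (qm11 : ℂ) * (x - y))
      + x * ((q0m1 : ℂ) * (y - 1) + (q1m1 : ℂ) * (y - x))) :
    (∀ g s : ℂ, ‖g‖ ≤ 1 → ‖s‖ = 1 →
      R (g * s) (g * s⁻¹) = g * (g * Δ g s - ((qm10 : ℂ) * s⁻¹ + (q0m1 : ℂ) * s))) ∧
    (∀ s : ℂ, ‖s‖ = 1 →
      ∃! g : ℂ, ‖g‖ < 1 ∧ g * Δ g s = (qm10 : ℂ) * s⁻¹ + (q0m1 : ℂ) * s) ∧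
    (∀ g s : ℂ, ‖g‖ < 1 → ‖s‖ = 1 →
      (R (g * s) (g * s⁻¹) = 0 ↔
        g = 0 ∨ g * Δ g s = (qm10 : ℂ) * s⁻¹ + (q0m1 : ℂ) * s)) := by
  have hne : ∀ s : ℂ, ‖s‖ = 1 → s ≠ 0 := by
    intro s hs h; rw [h] at hs; simp at hs
  have hfact : ∀ g s : ℂ, s ≠ 0 →
      R (g * s) (g * s⁻¹) = g * (g * Δ g s - ((qm10 : ℂ) * s⁻¹ + (q0m1 : ℂ) * s)) := by
    intro g s hs
    rw [hR, hΔ, hD0]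
    field_simp
    ring
  refine ⟨fun g s _ hs => hfact g s (hne s hs), fun s hs => ?_, fun g s hg hs => ?_⟩
  · have hs0 := hne s hs
    set A : ℂ := (q10:ℂ) + (q01:ℂ) + (q11:ℂ) + (θ:ℂ) + (qm10:ℂ) + (q0m1:ℂ)
      + (qm11:ℂ)*(1 - (s⁻¹)^2) + (q1m1:ℂ)*(1 - s^2) with hA
    set B : ℂ := (q10:ℂ)*s + (q01:ℂ)*s⁻¹ with hB
    set c : ℂ := (qm10 : ℂ) * s⁻¹ + (q0m1 : ℂ) * s with hc
    have hΔA : ∀ g : ℂ, Δ g s = A - B*g - (q11:ℂ)*g^2 := by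
      intro g
      rw [hΔ, hD0, hA, hB]
      field_simp
      ring
    have hterm : ∀ (q : ℝ) (w : ℂ), 0 ≤ q → ‖w‖ = 1 →
        0 ≤ ((q:ℂ)*(1 - w)).re := by
      intro q w hq hw
      have h1 : ((q:ℂ)*(1-w)).re = q * (1 - w.re) := by
        simp [Complex.mul_re, Complex.sub_re, Complex.one_re, Complex.sub_im, Complex.one_im]
      rw [h1]
      have h2 : w.re ≤ 1 := (Complex.re_le_norm w).trans (le_of_eq hw)
      exact mul_nonneg hq (by linarith)
    have hsinv : ‖s⁻¹‖ = 1 := by rw [norm_inv, hs, inv_one]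
    have hbound : ∀ z : ℂ, ‖z‖ = 1 →
        θ ≤ (A - B*z - (q11:ℂ)*z^2 - c*z⁻¹).re := by
      intro z hz
      have hz0 := hne z hz
      have hzinv : ‖z⁻¹‖ = 1 := by rw [norm_inv, hz, inv_one]
      have hXeq : A - B*z - (q11:ℂ)*z^2 - c*z⁻¹
          = (q10:ℂ)*(1 - z*s) + (q01:ℂ)*(1 - z*s⁻¹) + (q11:ℂ)*(1 - z^2)
            + (qm10:ℂ)*(1 - s⁻¹*z⁻¹) + (q0m1:ℂ)*(1 - s*z⁻¹)
            + (qm11:ℂ)*(1 - (s⁻¹)^2) + (q1m1:ℂ)*(1 - s^2) + (θ:ℂ) := by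
        rw [hA, hB, hc]; ring
      rw [hXeq]
      have i1 := hterm q10 (z*s) h10 (by rw [norm_mul, hz, hs, one_mul])
      have i2 := hterm q01 (z*s⁻¹) h01 (by rw [norm_mul, hz, hsinv, one_mul])
      have i3 := hterm q11 (z^2) h11 (by rw [norm_pow, hz, one_pow])
      have i4 := hterm qm10 (s⁻¹*z⁻¹) hm10 (by rw [norm_mul, hsinv, hzinv, one_mul])
      have i5 := hterm q0m1 (s*z⁻¹) h0m1 (by rw [norm_mul, hs, hzinv, one_mul])
      have i6 := hterm qm11 ((s⁻¹)^2) hm11 (by rw [norm_pow, hsinv, one_pow])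
      have i7 := hterm q1m1 (s^2) h1m1 (by rw [norm_pow, hs, one_pow])
      simp only [Complex.add_re, Complex.ofReal_re]
      linarith
    obtain ⟨a, ⟨ha1, ha2⟩, hu⟩ := core_lemma A B (q11:ℂ) c θ hθ hbound
    refine ⟨a, ⟨ha1, ?_⟩, ?_⟩
    · rw [hΔA]
      linear_combination ha2
    · intro g hg
      apply hu
      refine ⟨hg.1, ?_⟩
      have := hg.2
      rw [hΔA] at this
      linear_combination this
  · have hs0 := hne s hs
    rw [hfact g s hs0]
    constructor
    · intro h
      rcases mul_eq_zero.mp h with h | h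
      · exact Or.inl h
      · exact Or.inr (sub_eq_zero.mp h)
    · rintro (rfl | h)
      · simp
      · rw [h, sub_self, mul_zero]
end

section
/- Let D̄ be the closed unit disc in ℂ. Let G, G₁₀, G₀₀ : D̄×D̄ → ℂ and Y : D̄ → D̄ satisfy G(x, Y(x)) = 0 and G₁₀(x, Y(x)) ≠ 0 for all x ∈ D̄. Let V_m : D̄×D̄ → ℂ (m = 0, 1, 2, …) satisfy V_m(0,0) = 0 for all m ≥ 1, and suppose that for every m ≥ 0 and all (x,y) ∈ D̄×D̄: G(x,y)·V_m(x,y) = G₁₀(x,y)·[V_m(x,0) + P_{m−1}(x,y)] + G₀₀(x,y)·V_m(0,0), where P_m(x,y) = V_m(x,y) − V_m(x,0) − V_m(0,y) + V_m(0,0) and P_{−1} ≡ 0. Then: (i) for every m ≥ 0 and x ∈ D̄, G₁₀(x,Y(x))·V_m(x,0) = −G₀₀(x,Y(x))·V_m(0,0) − G₁₀(x,Y(x))·P_{m−1}(x,Y(x)); (ii) for every m ≥ 1 and (x,y) ∈ D̄×D̄, G(x,y)·V_m(x,y) = G₁₀(x,y)·Q_{m−1}(x,y), where Q_m(x,y)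 = V_m(x,y) − V_m(x,Y(x)) − V_m(0,y) + V_m(0,Y(x)); and (iii) for all (x,y) ∈ D̄×D̄, G(x,y)·G₁₀(x,Y(x))·V_0(x,y) = [G₀₀(x,y)·G₁₀(x,Y(x)) − G₀₀(x,Y(x))·G₁₀(x,y)]·V_0(0,0). -/
/-- the algebraic core of the power series approximation theorem.
With `G(x,Y(x)) = 0`, `G₁₀(x,Y(x)) ≠ 0`, `V_m(0,0) = 0` for `m ≥ 1`, and the functional
equations `G·V_m = G₁₀·(V_m(·,0) + P_{m−1}) + G₀₀·V_m(0,0)` on the closed bidisc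
(`P_{−1} ≡ 0`), one gets: (i) `G₁₀(x,Y(x))V_m(x,0) = −G₀₀(x,Y(x))V_m(0,0)
− G₁₀(x,Y(x))P_{m−1}(x,Y(x))`; (ii) for `m ≥ 1`, `G·V_m = G₁₀·Q_{m−1}`;
(iii) `G·G₁₀(x,Y(x))·V₀ = [G₀₀·G₁₀(x,Y(x)) − G₀₀(x,Y(x))·G₁₀]·V₀(0,0)`. -/
theorem stmt_10
    (G G10 G00 : ℂ → ℂ → ℂ) (Y : ℂ → ℂ)
    (hY : ∀ x : ℂ, ‖x‖ ≤ 1 → ‖Y x‖ ≤ 1)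
    (hGY : ∀ x : ℂ, ‖x‖ ≤ 1 → G x (Y x) = 0)
    (hG10Y : ∀ x : ℂ, ‖x‖ ≤ 1 → G10 x (Y x) ≠ 0)
    (V : ℕ → ℂ → ℂ → ℂ)
    (hV00 : ∀ m : ℕ, 1 ≤ m → V m 0 0 = 0)
    (P : ℕ → ℂ → ℂ → ℂ)
    (hP : ∀ m x y, P m x y = V m x y - V m x 0 - V m 0 y + V m 0 0)
    (Q : ℕ → ℂ → ℂ → ℂ)
    (hQ : ∀ m x y, Q m x y = V m x y - V m x (Y x) - V m 0 y + V m 0 (Y x))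
    (hfe : ∀ m : ℕ, ∀ x y : ℂ, ‖x‖ ≤ 1 → ‖y‖ ≤ 1 →
      G x y * V m x y
        = G10 x y * (V m x 0 + (if m = 0 then 0 else P (m - 1) x y))
          + G00 x y * V m 0 0) :
    (∀ m : ℕ, ∀ x : ℂ, ‖x‖ ≤ 1 →
      G10 x (Y x) * V m x 0
        = -(G00 x (Y x) * V m 0 0)
          - G10 x (Y x) * (if m = 0 then 0 else P (m - 1) x (Y x))) ∧
    (∀ m : ℕ, 1 ≤ m → ∀ x y : ℂ, ‖x‖ ≤ 1 → ‖y‖ ≤ 1 →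
      G x y * V m x y = G10 x y * Q (m - 1) x y) ∧
    (∀ x y : ℂ, ‖x‖ ≤ 1 → ‖y‖ ≤ 1 →
      G x y * (G10 x (Y x) * V 0 x y)
        = (G00 x y * G10 x (Y x) - G00 x (Y x) * G10 x y) * V 0 0 0) := by
  have key : ∀ m : ℕ, ∀ x : ℂ, ‖x‖ ≤ 1 →
      G10 x (Y x) * V m x 0
        = -(G00 x (Y x) * V m 0 0)
          - G10 x (Y x) * (if m = 0 then 0 else P (m - 1) x (Y x)) := by
    intro m x hx
    have h := hfe m x (Y x) hx (hY x hx)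
    rw [hGY x hx] at h
    linear_combination -h
  refine ⟨key, ?_, ?_⟩
  · intro m hm x y hx hy
    have h := hfe m x y hx hy
    have hk := key m x hx
    have h0 : V m 0 0 = 0 := hV00 m hm
    have hm0 : m ≠ 0 := by omega
    simp only [if_neg hm0] at h hk
    rw [h0] at h hk
    have hVx0 : V m x 0 = -P (m - 1) x (Y x) :=
      mul_left_cancel₀ (hG10Y x hx) (by rw [hk]; ring)
    rw [h, hVx0, hP, hP, hQ]
    ring
  · intro x y hx hy
    have h := hfe 0 x y hx hy
    have hk := key 0 x hx
    rw [if_pos rfl] at h hk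
    calc G x y * (G10 x (Y x) * V 0 x y)
        = G10 x (Y x) * (G x y * V 0 x y) := by ring
      _ = G10 x (Y x) * (G10 x y * (V 0 x 0 + 0) + G00 x y * V 0 0 0) := by rw [h]
      _ = G10 x y * (G10 x (Y x) * V 0 x 0) + G00 x y * G10 x (Y x) * V 0 0 0 := by ring
      _ = _ := by rw [hk]; ring
end

section
/- Let D̄ be the closed unit disc in ℂ. Let R, T, K, C, Π : D̄×D̄ → ℂ and Ỹ : D̄ → D̄ satisfy, for all x ∈ D̄: R(x,Ỹ(x))·T(x,Ỹ(x)) − x·Ỹ(x) = 0, K(x,Ỹ(x)) ≠ 0 and T(x,Ỹ(x)) ≠ 0. Suppose that for all (x,y) ∈ D̄×D̄: Π(x,y)·[R(x,y)T(x,y) − xy] = T(x,y)·[K(x,y)·Π(x,0) + C(x,y)·Π(0,0)]. Then for all (x,y) ∈ D̄×D̄: Π(x,y)·[xy − T(x,y)R(x,y)]·K(x,Ỹ(x)) = T(x,y)·[K(x,y)·C(x,Ỹ(x)) − K(x,Ỹ(x))·C(x,y)]·Π(0,0). -/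
/-- the boundary case `w = 0` of the functional equation. If
`R(x,Ỹ(x))T(x,Ỹ(x)) − x·Ỹ(x) = 0`, `K(x,Ỹ(x)) ≠ 0`, `T(x,Ỹ(x)) ≠ 0` on the closed disc,
and `Π(x,y)[R T − xy] = T[K·Π(x,0) + C·Π(0,0)]` on the closed bidisc, then
`Π(x,y)[xy − T R]·K(x,Ỹ(x)) = T·[K(x,y)C(x,Ỹ(x)) − K(x,Ỹ(x))C(x,y)]·Π(0,0)`. -/
theorem stmt_11 (R T K C Pgf : ℂ → ℂ → ℂ) (Yt : ℂ → ℂ)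
    (hYt : ∀ x : ℂ, ‖x‖ ≤ 1 → ‖Yt x‖ ≤ 1)
    (hker : ∀ x : ℂ, ‖x‖ ≤ 1 → R x (Yt x) * T x (Yt x) - x * Yt x = 0)
    (hK : ∀ x : ℂ, ‖x‖ ≤ 1 → K x (Yt x) ≠ 0)
    (hT : ∀ x : ℂ, ‖x‖ ≤ 1 → T x (Yt x) ≠ 0)
    (hfe : ∀ x y : ℂ, ‖x‖ ≤ 1 → ‖y‖ ≤ 1 →
      Pgf x y * (R x y * T x y - x * y)
        = T x y * (K x y * Pgf x 0 + C x y * Pgf 0 0)) :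
    ∀ x y : ℂ, ‖x‖ ≤ 1 → ‖y‖ ≤ 1 →
      Pgf x y * (x * y - T x y * R x y) * K x (Yt x)
        = T x y * (K x y * C x (Yt x) - K x (Yt x) * C x y) * Pgf 0 0 := by
  intro x y hx hy
  have h1 := hfe x (Yt x) hx (hYt x hx)
  rw [hker x hx, mul_zero] at h1
  have h2 : K x (Yt x) * Pgf x 0 = - (C x (Yt x) * Pgf 0 0) := by
    have := mul_eq_zero.mp h1.symm
    rcases this with h | h
    · exact absurd h (hT x hx)
    · linear_combination h
  have h3 := hfe x y hx hy
  have h4 : Pgf x y * (R x y * T x y - x * y) * K x (Yt x)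
      = T x y * (K x y * (K x (Yt x) * Pgf x 0) + K x (Yt x) * (C x y * Pgf 0 0)) := by
    linear_combination K x (Yt x) * h3
  rw [h2] at h4
  linear_combination -h4
end

section
/- Let N ≥ 2 be an integer, λ₀ > 0 and μ > 0 reals, and set ρ₀ = λ₀/μ. Define s_N = 0 and s_k = λ₀/(μ + λ₀·1_{k ≠ N−1} − μ·s_{k+1}) for k = N−1 down to 1. If complex numbers Π₁, …, Π_N satisfy Π_k = s_{k−1}·Π_{k−1} for k = 2,…,N, then Π_k = ρ₀^{k−1}·Π₁ for every k = 1,…,N. -/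
/-- with `ρ₀ = λ₀/μ`, the backward recursion `s_N = 0`,
`s_k = λ₀/(μ + λ₀·1_{k≠N−1} − μ s_{k+1})`, and `Π_k = s_{k−1}Π_{k−1}` for
`k = 2,…,N`, one has `Π_k = ρ₀^{k−1}Π₁` for every `k = 1,…,N`. -/
theorem stmt_16 (N : ℕ) (hN : 2 ≤ N) (lam0 mu : ℝ) (hlam : 0 < lam0) (hmu : 0 < mu)
    (rho0 : ℝ) (hrho : rho0 = lam0 / mu)
    (s : ℕ → ℝ) (hsN : s N = 0)
    (hrec : ∀ k, 1 ≤ k → k ≤ N - 1 →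
      s k = lam0 / (mu + (if k ≠ N - 1 then lam0 else 0) - mu * s (k + 1)))
    (Pi : ℕ → ℂ)
    (hPi : ∀ k, 2 ≤ k → k ≤ N → Pi k = (s (k - 1) : ℂ) * Pi (k - 1)) :
    ∀ k, 1 ≤ k → k ≤ N → Pi k = (rho0 : ℂ) ^ (k - 1) * Pi 1 := by
  have hmu' : mu ≠ 0 := ne_of_gt hmu
  -- first: s k = rho0 for 1 ≤ k ≤ N-1, by downward induction
  have hstep : ∀ m : ℕ, m ≤ N - 2 → s (N - 1 - m) = rho0 := by
    intro m
    induction m with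
    | zero =>
      intro _
      have h1 : 1 ≤ N - 1 := by omega
      have h := hrec (N - 1) h1 le_rfl
      have hN1 : N - 1 + 1 = N := by omega
      simp only [ne_eq, not_true_eq_false, if_false, hN1, hsN] at h
      simpa [hrho, mul_zero] using h
    | succ m ih =>
      intro hm
      have hk1 : 1 ≤ N - 1 - (m + 1) := by omega
      have hk2 : N - 1 - (m + 1) ≤ N - 1 := by omega
      have hkne : N - 1 - (m + 1) ≠ N - 1 := by omega
      have h := hrec (N - 1 - (m + 1)) hk1 hk2
      have hsucc : N - 1 - (m + 1) + 1 = N - 1 - m := by omega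
      rw [if_pos hkne, hsucc, ih (by omega)] at h
      rw [h, hrho]
      field_simp
      simp [hmu']
  have hs : ∀ k, 1 ≤ k → k ≤ N - 1 → s k = rho0 := by
    intro k h1 h2
    have : N - 1 - (N - 1 - k) = k := by omega
    rw [← this]
    exact hstep (N - 1 - k) (by omega)
  -- forward induction on k
  intro k hk1 hkN
  induction k with
  | zero => omega
  | succ k ih =>
    rcases Nat.eq_or_lt_of_le hk1 with h | h
    · simp [← h]
    · have hk : 1 ≤ k := by omega
      have hPik := hPi (k + 1) (by omega) hkN
      simp only [Nat.add_sub_cancel] at hPik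
      rw [hPik, ih hk (by omega), hs k hk (by omega)]
      have hk' : k + 1 - 1 = (k - 1) + 1 := by omega
      rw [hk', pow_succ]
      ring
end
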